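/- Let (a_n, b_n) be i.i.d. with E(‖b_1‖^s) < ∞, and suppose k(s) = lim_n (E‖a_1⋯a_n‖^s)^{1/n} < 1 for some s ∈ (0, χ). Then the stationary solution z = Σ_{k=0}^∞ a_1⋯a_k b_{k+1} satisfies E(‖z‖^s) < ∞, using the inequality ‖Σ x_k‖^s ≤ max(1,s)·Σ‖x_k‖^s appropriately (for s ≤ 1, ‖Σ x_k‖^s ≤ Σ‖x_k‖^s; for s ≥ 1 use the triangle and Minkowski inequalities). -/

import Mathlib

open Filter MeasureTheory ProbabilityTheory Matrix ENNReal
open scoped Matrix.Norms.L2Operator NNReal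

noncomputable instance matMS (d : ℕ) : MeasurableSpace (Matrix (Fin d) (Fin d) ℝ) :=
  inferInstanceAs (MeasurableSpace (Fin d → Fin d → ℝ))

noncomputable def matProd {d : ℕ} {Ω : Type*} (A : ℕ → Ω → Matrix (Fin d) (Fin d) ℝ)
    (n : ℕ) (ω : Ω) : Matrix (Fin d) (Fin d) ℝ :=
  ((List.range n).map (fun i => A (i + 1) ω)).prod

instance matBorel (d : ℕ) : BorelSpace (Matrix (Fin d) (Fin d) ℝ) := by
  have h : BorelSpace (Fin d → Fin d → ℝ) := inferInstance
  exact ⟨h.measurable_eq⟩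

section aux
variable {d : ℕ} {Ω : Type*} [MeasurableSpace Ω]

lemma meas_entry {f : Ω → Matrix (Fin d) (Fin d) ℝ} (hf : Measurable f) (i j : Fin d) :
    Measurable (fun ω => f ω i j) :=
  (measurable_pi_apply j).comp ((measurable_pi_apply i).comp hf)

lemma meas_matrix_of_entries {f : Ω → Matrix (Fin d) (Fin d) ℝ}
    (hf : ∀ i j, Measurable (fun ω => f ω i j)) : Measurable f :=
  measurable_pi_lambda _ fun i => measurable_pi_lambda _ fun j => hf i j

lemma meas_mul {f g : Ω → Matrix (Fin d) (Fin d) ℝ} (hf : Measurable f) (hg : Measurable g) :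
    Measurable (fun ω => f ω * g ω) := by
  apply meas_matrix_of_entries
  intro i j
  simp only [Matrix.mul_apply]
  exact Finset.measurable_sum _ fun k _ => (meas_entry hf i k).mul (meas_entry hg k j)

lemma meas_listProd {ι : Type*} (l : List ι) (f : ι → Ω → Matrix (Fin d) (Fin d) ℝ)
    (hf : ∀ i, Measurable (f i)) :
    Measurable (fun ω => (l.map (fun i => f i ω)).prod) := by
  induction l with
  | nil => simp only [List.map_nil, List.prod_nil]; exact measurable_const
  | cons a t ih => simpa using meas_mul (hf a) ih

lemma meas_mulVec {f : Ω → Matrix (Fin d) (Fin d) ℝ} {v : Ω → Fin d → ℝ}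
    (hf : Measurable f) (hv : Measurable v) :
    Measurable (fun ω => (f ω).mulVec (v ω)) := by
  apply measurable_pi_lambda
  intro i
  simp only [Matrix.mulVec, dotProduct]
  exact Finset.measurable_sum _ fun k _ =>
    (meas_entry hf i k).mul ((measurable_pi_apply k).comp hv)

lemma meas_det {f : Ω → Matrix (Fin d) (Fin d) ℝ} (hf : Measurable f) :
    Measurable (fun ω => (f ω).det) := by
  simp only [Matrix.det_apply]
  exact Finset.measurable_sum _ fun σ _ =>
    (Finset.measurable_prod _ fun k _ => meas_entry hf (σ k) k).const_smul _

lemma meas_inv {f : Ω → Matrix (Fin d) (Fin d) ℝ} (hf : Measurable f) :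
    Measurable (fun ω => (f ω)⁻¹) := by
  apply meas_matrix_of_entries
  intro i j
  simp only [Matrix.inv_def, Matrix.smul_apply, Ring.inverse_eq_inv', smul_eq_mul]
  have hadj : Measurable (fun ω => (f ω).adjugate i j) := by
    simp only [Matrix.adjugate_apply]
    have hupd : Measurable (fun ω => (f ω).updateRow j (Pi.single i 1)) := by
      apply meas_matrix_of_entries
      intro a b
      simp only [Matrix.updateRow_apply]
      by_cases h : a = j
      · simp [h]
      · simp only [h, if_false]
        exact meas_entry hf a b
    exact meas_det hupd
  exact ((meas_det hf).inv).mul hadj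

lemma meas_rpow_nnnorm_mat (s : ℝ) {f : Ω → Matrix (Fin d) (Fin d) ℝ} (hf : Measurable f) :
    Measurable (fun ω => (‖f ω‖₊ : ℝ≥0∞) ^ s) :=
  (ENNReal.continuous_rpow_const.measurable).comp
    ((ENNReal.continuous_coe.measurable).comp ((continuous_nnnorm.measurable).comp hf))

lemma meas_rpow_nnnorm_vec (s : ℝ) {v : Ω → Fin d → ℝ} (hv : Measurable v) :
    Measurable (fun ω => (‖v ω‖₊ : ℝ≥0∞) ^ s) :=
  (ENNReal.continuous_rpow_const.measurable).comp (hv.nnnorm.coe_nnreal_ennreal)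

def sel (d : ℕ) (S : Finset ℕ)
    (x : (i : S) → (Matrix (Fin d) (Fin d) ℝ × (Fin d → ℝ))) (j : ℕ) :
    Matrix (Fin d) (Fin d) ℝ :=
  if h : j ∈ S then (x ⟨j, h⟩).1 else 1

lemma meas_sel (d : ℕ) (S : Finset ℕ) (j : ℕ) : Measurable (fun x => sel d S x j) := by
  unfold sel
  split_ifs with h
  · exact measurable_fst.comp (measurable_pi_apply _)
  · exact measurable_const

lemma aux_tsum_lt_top {c : ℕ → ℝ≥0∞} {r K : ℝ≥0∞} (hr : r < 1) (hK : K ≠ ⊤)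
    (hfin : ∀ k, c k ≠ ⊤) (N₀ : ℕ) (h : ∀ k, N₀ ≤ k → c k ≤ K * r ^ k) :
    ∑' k, c k < ⊤ := by
  have key : ∑ i ∈ Finset.range N₀, c i + ∑' i, c (i + N₀) = ∑' k, c k :=
    Summable.sum_add_tsum_nat_add' (f := c) (k := N₀) ENNReal.summable
  rw [← key]
  have h1 : (∑ i ∈ Finset.range N₀, c i) < ⊤ :=
    ENNReal.sum_lt_top.2 fun i _ => (hfin i).lt_top
  have h2 : (∑' i, c (i + N₀)) ≤ ∑' i : ℕ, K * r ^ i := by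
    calc (∑' i, c (i + N₀)) ≤ ∑' i : ℕ, K * r ^ (i + N₀) :=
          ENNReal.tsum_le_tsum fun i => h _ (Nat.le_add_left _ _)
      _ ≤ ∑' i : ℕ, K * r ^ i := ENNReal.tsum_le_tsum fun i =>
          mul_le_mul_right (pow_le_pow_of_le_one zero_le hr.le (Nat.le_add_right _ _)) _
  have h3 : (∑' i : ℕ, K * r ^ i) < ⊤ := by
    rw [ENNReal.tsum_mul_left, ENNReal.tsum_geometric]
    exact ENNReal.mul_lt_top hK.lt_top
      (by simp [ENNReal.inv_lt_top, tsub_pos_iff_lt, hr])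
  exact ENNReal.add_lt_top.2 ⟨h1, h2.trans_lt h3⟩

lemma aux_pi_le_l2 (d : ℕ) (v : Fin d → ℝ) :
    ‖v‖₊ ≤ ‖(WithLp.equiv 2 (Fin d → ℝ)).symm v‖₊ := by
  have h := (PiLp.lipschitzWith_ofLp 2 (fun _ : Fin d => ℝ)).nndist_le
    ((WithLp.equiv 2 (Fin d → ℝ)).symm v) 0
  simpa [nndist_eq_nnnorm] using h

lemma aux_l2_le_pi (d : ℕ) : ∃ C : ℝ≥0, ∀ v : Fin d → ℝ,
    ‖(WithLp.equiv 2 (Fin d → ℝ)).symm v‖₊ ≤ C * ‖v‖₊ := by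
  refine ⟨(Fintype.card (Fin d) : ℝ≥0) ^ (1 / (2 : ℝ≥0∞)).toReal, fun v => ?_⟩
  have h := (PiLp.antilipschitzWith_ofLp 2 (fun _ : Fin d => ℝ)).le_mul_nndist
    ((WithLp.equiv 2 (Fin d → ℝ)).symm v) 0
  simpa [nndist_eq_nnnorm] using h

end aux

/-- Let `(a_n, b_n)` be i.i.d. with `E(‖b_1‖^s) < ∞` and suppose
`k(s) = lim_n (E‖a_1⋯a_n‖^s)^{1/n} < 1` for some `s > 0`. Then the stationary
solution `z = ∑_{k=0}^∞ a_1⋯a_k b_{k+1}` satisfies `E(‖z‖^s) < ∞`. -/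
theorem stmt6 {d : ℕ} {Ω : Type*} [MeasureSpace Ω]
    [IsProbabilityMeasure (volume : Measure Ω)]
    (A : ℕ → Ω → Matrix (Fin d) (Fin d) ℝ) (B : ℕ → Ω → (Fin d → ℝ))
    (hinv : ∀ n, ∀ ω, IsUnit (A n ω))
    (hmeas : ∀ n, Measurable (fun ω => (A n ω, B n ω)))
    (hindep : iIndepFun (fun n ω => (A n ω, B n ω)) volume)
    (hident : ∀ n, IdentDistrib (fun ω => (A n ω, B n ω)) (fun ω => (A 1 ω, B 1 ω))
      volume volume)
    (s : ℝ) (hs : 0 < s)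
    (hb : (∫⁻ ω, (‖B 1 ω‖₊ : ℝ≥0∞) ^ s) < ⊤)
    (ks : ℝ≥0∞)
    (hks : Tendsto (fun n : ℕ =>
      (∫⁻ ω, (‖matProd A n ω‖₊ : ℝ≥0∞) ^ s) ^ (1 / (n : ℝ))) atTop (nhds ks))
    (hks1 : ks < 1)
    (Z : Ω → (Fin d → ℝ)) (hZmeas : Measurable Z)
    (hZ : ∀ᵐ ω : Ω,
      Tendsto (fun N : ℕ => ∑ k ∈ Finset.range N, (matProd A k ω).mulVec (B (k + 1) ω))
        atTop (nhds (Z ω))) :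
    (∫⁻ ω, (‖Z ω‖₊ : ℝ≥0∞) ^ s) < ⊤ := by
  classical
  rcases Nat.eq_zero_or_pos d with hd | hd
  · subst hd
    have hzero : ∀ ω : Ω, (‖Z ω‖₊ : ℝ≥0∞) ^ s = 0 := by
      intro ω
      have hz : Z ω = 0 := Subsingleton.elim _ _
      rw [hz]
      simp only [nnnorm_zero, ENNReal.coe_zero]
      exact ENNReal.zero_rpow_of_pos hs
    calc (∫⁻ ω, (‖Z ω‖₊ : ℝ≥0∞) ^ s) = ∫⁻ _, (0 : ℝ≥0∞) := lintegral_congr hzero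
      _ < ⊤ := by simp
  haveI : Nonempty (Fin d) := ⟨⟨0, hd⟩⟩
  -- measurability of basic objects
  have hA : ∀ n, Measurable (A n) := fun n => measurable_fst.comp (hmeas n)
  have hBm : ∀ n, Measurable (B n) := fun n => measurable_snd.comp (hmeas n)
  have hPm : ∀ n, Measurable (matProd A n) := fun n =>
    meas_listProd (List.range n) (fun i => A (i + 1)) (fun i => hA (i + 1))
  set c : ℕ → ℝ≥0∞ := fun n => ∫⁻ ω, (‖matProd A n ω‖₊ : ℝ≥0∞) ^ s with hc
  set f : ℕ → Ω → (Fin d → ℝ) := fun k ω => (matProd A k ω).mulVec (B (k + 1) ω) with hf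
  have hfm : ∀ k, Measurable (f k) := fun k => meas_mulVec (hPm k) (hBm (k + 1))
  -- geometric decay of c
  obtain ⟨r, hr1, N₀, hN₀1, hgeo⟩ :
      ∃ r < (1 : ℝ≥0∞), ∃ N₀ : ℕ, 1 ≤ N₀ ∧ ∀ n, N₀ ≤ n → c n ≤ r ^ n := by
    obtain ⟨r, hksr, hr1⟩ := exists_between hks1
    have hev : ∀ᶠ n : ℕ in atTop, (c n) ^ (1 / (n : ℝ)) < r :=
      hks.eventually_lt_const hksr
    obtain ⟨N, hN⟩ := hev.exists_forall_of_atTop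
    refine ⟨r, hr1, max N 1, le_max_right _ _, fun n hn => ?_⟩
    have hn1 : 1 ≤ n := le_trans (le_max_right _ _) hn
    have hNn : N ≤ n := le_trans (le_max_left _ _) hn
    have h := (hN n hNn).le
    have hne : (n : ℝ) ≠ 0 := Nat.cast_ne_zero.2 (by omega)
    have h2 := ENNReal.rpow_le_rpow h (by positivity : (0 : ℝ) ≤ (n : ℝ))
    rwa [← ENNReal.rpow_mul, one_div, inv_mul_cancel₀ hne, ENNReal.rpow_one,
      ENNReal.rpow_natCast] at h2
  have hrtop : r ≠ ⊤ := (hr1.trans ENNReal.one_lt_top).ne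
  -- identical distribution of the B's
  set Eb : ℝ≥0∞ := ∫⁻ ω, (‖B 1 ω‖₊ : ℝ≥0∞) ^ s with hEb
  have hBid : ∀ k : ℕ, (∫⁻ ω, (‖B (k + 1) ω‖₊ : ℝ≥0∞) ^ s) = Eb := by
    intro k
    have h1 : IdentDistrib (B (k + 1)) (B 1) volume volume :=
      (hident (k + 1)).comp measurable_snd
    have h2 : IdentDistrib (fun ω => (‖B (k + 1) ω‖₊ : ℝ≥0∞) ^ s)
        (fun ω => (‖B 1 ω‖₊ : ℝ≥0∞) ^ s) volume volume :=
      h1.comp ((ENNReal.continuous_rpow_const.measurable).comp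
        (measurable_nnnorm.coe_nnreal_ennreal))
    exact h2.lintegral_eq
  -- independence: matProd A k vs B (k+1)
  have hIndPB : ∀ k, IndepFun (fun ω => (‖matProd A k ω‖₊ : ℝ≥0∞) ^ s)
      (fun ω => (‖B (k + 1) ω‖₊ : ℝ≥0∞) ^ s) volume := by
    intro k
    set S : Finset ℕ := Finset.range (k + 1) with hS
    set T : Finset ℕ := {k + 1} with hT
    have hST : Disjoint S T := by
      simp [hS, hT, Finset.disjoint_singleton_right]
    have base := hindep.indepFun_finset S T hST hmeas
    set φ : ((i : S) → (Matrix (Fin d) (Fin d) ℝ × (Fin d → ℝ))) → ℝ≥0∞ :=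
      fun x => (‖((List.range k).map (fun i => sel d S x (i + 1))).prod‖₊ : ℝ≥0∞) ^ s with hφ
    set ψ : ((i : T) → (Matrix (Fin d) (Fin d) ℝ × (Fin d → ℝ))) → ℝ≥0∞ :=
      fun x => (‖(x ⟨k + 1, by simp [hT]⟩).2‖₊ : ℝ≥0∞) ^ s with hψ
    have hφm : Measurable φ :=
      meas_rpow_nnnorm_mat s (meas_listProd _ _ (fun i => meas_sel d S (i + 1)))
    have hψm : Measurable ψ :=
      (ENNReal.continuous_rpow_const.measurable).comp
        (((measurable_snd.comp (measurable_pi_apply _)).nnnorm).coe_nnreal_ennreal)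
    have hcomp := base.comp hφm hψm
    have e1 : (φ ∘ fun ω (i : S) => (A i ω, B i ω)) =
        fun ω => (‖matProd A k ω‖₊ : ℝ≥0∞) ^ s := by
      funext ω
      simp only [Function.comp_apply, hφ, matProd]
      have hmap : List.map (fun i => sel d S (fun i : S => (A (↑i) ω, B (↑i) ω)) (i + 1))
          (List.range k) = List.map (fun i => A (i + 1) ω) (List.range k) := by
        apply List.map_congr_left
        intro i hi
        have hmem : i + 1 ∈ S := by
          simp only [hS, Finset.mem_range]
          exact Nat.succ_lt_succ (List.mem_range.1 hi)
        simp [sel, hmem]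
      rw [hmap]
    have e2 : (ψ ∘ fun ω (i : T) => (A i ω, B i ω)) =
        fun ω => (‖B (k + 1) ω‖₊ : ℝ≥0∞) ^ s := rfl
    rwa [e1, e2] at hcomp
  -- finiteness of all c k
  have cfin : ∀ k, c k ≠ ⊤ := by
    intro k
    rcases le_or_gt N₀ k with hk | hk
    · exact ((hgeo k hk).trans_lt (pow_lt_top (n := k) hrtop.lt_top)).ne
    -- k < N₀
    set Q : Ω → Matrix (Fin d) (Fin d) ℝ :=
      fun ω => ((List.range (N₀ - k)).map (fun i => A (k + i + 1) ω)).prod with hQ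
    have hQm : Measurable Q := meas_listProd _ _ (fun i => hA (k + i + 1))
    have hsplit : ∀ ω, matProd A N₀ ω = matProd A k ω * Q ω := by
      intro ω
      have hN : N₀ = k + (N₀ - k) := by omega
      rw [matProd, hN, List.range_add, List.map_append, List.prod_append, List.map_map]
      rfl
    have hQu : ∀ ω, IsUnit (Q ω) := by
      intro ω
      apply List.prod_isUnit
      intro m hm
      obtain ⟨i, _, rfl⟩ := List.mem_map.1 hm
      exact hinv _ ω
    set g : Ω → ℝ≥0∞ := fun ω => ((‖(Q ω)⁻¹‖₊ : ℝ≥0∞) ^ s)⁻¹ with hg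
    have hgm : Measurable g := (meas_rpow_nnnorm_mat s (meas_inv hQm)).inv
    have hQinvne : ∀ ω, (Q ω)⁻¹ ≠ 0 := by
      intro ω
      have : IsUnit (Q ω)⁻¹ := (Matrix.isUnit_nonsing_inv_iff).2 (hQu ω)
      exact this.ne_zero
    have hxne : ∀ ω, ((‖(Q ω)⁻¹‖₊ : ℝ≥0∞)) ^ s ≠ 0 := by
      intro ω
      have hpos : (0 : ℝ≥0∞) < (‖(Q ω)⁻¹‖₊ : ℝ≥0∞) := by
        rw [ENNReal.coe_pos]
        exact nnnorm_pos.2 (hQinvne ω)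
      exact (ENNReal.rpow_pos hpos ENNReal.coe_ne_top).ne'
    have hxtop : ∀ ω, ((‖(Q ω)⁻¹‖₊ : ℝ≥0∞)) ^ s ≠ ⊤ :=
      fun ω => ENNReal.rpow_ne_top_of_nonneg hs.le ENNReal.coe_ne_top
    have hgne : ∀ ω, g ω ≠ 0 := by
      intro ω
      simp only [hg, ne_eq, ENNReal.inv_eq_zero]
      exact hxtop ω
    have hpoint : ∀ ω, (‖matProd A k ω‖₊ : ℝ≥0∞) ^ s * g ω ≤
        (‖matProd A N₀ ω‖₊ : ℝ≥0∞) ^ s := by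
      intro ω
      have hdet : IsUnit (Q ω).det := (Matrix.isUnit_iff_isUnit_det _).1 (hQu ω)
      have hMQ : matProd A k ω * Q ω * (Q ω)⁻¹ = matProd A k ω :=
        Matrix.mul_nonsing_inv_cancel_right _ _ hdet
      have hnorm : ‖matProd A k ω‖₊ ≤ ‖matProd A N₀ ω‖₊ * ‖(Q ω)⁻¹‖₊ := by
        conv_lhs => rw [← hMQ]
        rw [hsplit ω]
        exact nnnorm_mul_le _ _
      have h1 : (‖matProd A k ω‖₊ : ℝ≥0∞) ^ s ≤
          (‖matProd A N₀ ω‖₊ : ℝ≥0∞) ^ s * (‖(Q ω)⁻¹‖₊ : ℝ≥0∞) ^ s := by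
        calc (‖matProd A k ω‖₊ : ℝ≥0∞) ^ s
            ≤ ((‖matProd A N₀ ω‖₊ * ‖(Q ω)⁻¹‖₊ : ℝ≥0) : ℝ≥0∞) ^ s :=
              ENNReal.rpow_le_rpow (ENNReal.coe_le_coe.2 hnorm) hs.le
          _ = _ := by rw [ENNReal.coe_mul, ENNReal.mul_rpow_of_nonneg _ _ hs.le]
      calc (‖matProd A k ω‖₊ : ℝ≥0∞) ^ s * g ω
          ≤ ((‖matProd A N₀ ω‖₊ : ℝ≥0∞) ^ s * (‖(Q ω)⁻¹‖₊ : ℝ≥0∞) ^ s) * g ω :=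
            mul_le_mul_left h1 _
        _ = (‖matProd A N₀ ω‖₊ : ℝ≥0∞) ^ s *
            ((‖(Q ω)⁻¹‖₊ : ℝ≥0∞) ^ s * ((‖(Q ω)⁻¹‖₊ : ℝ≥0∞) ^ s)⁻¹) := by
            rw [hg, mul_assoc]
        _ = (‖matProd A N₀ ω‖₊ : ℝ≥0∞) ^ s := by
            rw [ENNReal.mul_inv_cancel (hxne ω) (hxtop ω), mul_one]
    -- independence of matProd A k and g
    have hind : IndepFun (fun ω => (‖matProd A k ω‖₊ : ℝ≥0∞) ^ s) g volume := by
      set S : Finset ℕ := Finset.range (k + 1) with hS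
      set T : Finset ℕ := Finset.Icc (k + 1) N₀ with hT
      have hST : Disjoint S T := by
        rw [Finset.disjoint_left]
        intro a haS haT
        rw [hS, Finset.mem_range] at haS
        rw [hT, Finset.mem_Icc] at haT
        omega
      have base := hindep.indepFun_finset S T hST hmeas
      set φ : ((i : S) → (Matrix (Fin d) (Fin d) ℝ × (Fin d → ℝ))) → ℝ≥0∞ :=
        fun x => (‖((List.range k).map (fun i => sel d S x (i + 1))).prod‖₊ : ℝ≥0∞) ^ s with hφ
      set ψ : ((i : T) → (Matrix (Fin d) (Fin d) ℝ × (Fin d → ℝ))) → ℝ≥0∞ :=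
        fun x => (((‖(((List.range (N₀ - k)).map
          (fun i => sel d T x (k + i + 1))).prod)⁻¹‖₊ : ℝ≥0∞)) ^ s)⁻¹ with hψ
      have hφm : Measurable φ :=
        meas_rpow_nnnorm_mat s (meas_listProd _ _ (fun i => meas_sel d S (i + 1)))
      have hψm : Measurable ψ :=
        (meas_rpow_nnnorm_mat s (meas_inv
          (meas_listProd _ _ (fun i => meas_sel d T (k + i + 1))))).inv
      have hcomp := base.comp hφm hψm
      have e1 : (φ ∘ fun ω (i : S) => (A i ω, B i ω)) =
          fun ω => (‖matProd A k ω‖₊ : ℝ≥0∞) ^ s := by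
        funext ω
        simp only [Function.comp_apply, hφ, matProd]
        have hmap : List.map (fun i => sel d S (fun i : S => (A (↑i) ω, B (↑i) ω)) (i + 1))
            (List.range k) = List.map (fun i => A (i + 1) ω) (List.range k) := by
          apply List.map_congr_left
          intro i hi
          have hmem : i + 1 ∈ S := by
            simp only [hS, Finset.mem_range]
            exact Nat.succ_lt_succ (List.mem_range.1 hi)
          simp [sel, hmem]
        rw [hmap]
      have e2 : (ψ ∘ fun ω (i : T) => (A i ω, B i ω)) = g := by
        funext ω
        simp only [Function.comp_apply, hψ, hg, hQ]
        have hmap : List.map (fun i => sel d T (fun i : T => (A (↑i) ω, B (↑i) ω)) (k + i + 1))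
            (List.range (N₀ - k)) = List.map (fun i => A (k + i + 1) ω) (List.range (N₀ - k)) := by
          apply List.map_congr_left
          intro i hi
          have hmem : k + i + 1 ∈ T := by
            simp only [hT, Finset.mem_Icc]
            have := List.mem_range.1 hi
            omega
          simp [sel, hmem]
        rw [hmap]
      rwa [e1, e2] at hcomp
    have hprod : (∫⁻ ω, (‖matProd A k ω‖₊ : ℝ≥0∞) ^ s * g ω) = c k * ∫⁻ ω, g ω :=
      lintegral_mul_eq_lintegral_mul_lintegral_of_indepFun
        (meas_rpow_nnnorm_mat s (hPm k)) hgm hind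
    have hle : c k * (∫⁻ ω, g ω) ≤ c N₀ := by
      rw [← hprod]
      exact lintegral_mono hpoint
    have hgI : 0 < ∫⁻ ω, g ω := by
      rw [lintegral_pos_iff_support hgm]
      have hsupp : Function.support g = Set.univ :=
        Set.eq_univ_of_forall (fun ω => hgne ω)
      rw [hsupp]
      simp
    intro hck
    rw [hck, ENNReal.top_mul hgI.ne'] at hle
    exact (((hgeo N₀ le_rfl).trans_lt (pow_lt_top (n := N₀) hrtop.lt_top)).ne) (top_le_iff.1 hle)
  -- bound on moments of f k
  obtain ⟨C₀, hC₀⟩ := aux_l2_le_pi d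
  set K : ℝ≥0∞ := ((C₀ : ℝ≥0∞)) ^ s * Eb with hK
  have hKne : K ≠ ⊤ :=
    ENNReal.mul_ne_top (ENNReal.rpow_ne_top_of_nonneg hs.le ENNReal.coe_ne_top) hb.ne
  have hm_le : ∀ k, (∫⁻ ω, (‖f k ω‖₊ : ℝ≥0∞) ^ s) ≤ K * c k := by
    intro k
    have hpt : ∀ ω, (‖f k ω‖₊ : ℝ≥0∞) ^ s ≤
        (C₀ : ℝ≥0∞) ^ s * ((‖matProd A k ω‖₊ : ℝ≥0∞) ^ s * (‖B (k + 1) ω‖₊ : ℝ≥0∞) ^ s) := by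
      intro ω
      have h1 : ‖f k ω‖₊ ≤ ‖matProd A k ω‖₊ * (C₀ * ‖B (k + 1) ω‖₊) := by
        calc ‖f k ω‖₊ ≤ ‖(WithLp.equiv 2 (Fin d → ℝ)).symm (f k ω)‖₊ := aux_pi_le_l2 d _
          _ ≤ ‖matProd A k ω‖₊ * ‖(WithLp.equiv 2 (Fin d → ℝ)).symm (B (k + 1) ω)‖₊ :=
            Matrix.l2_opNNNorm_mulVec (matProd A k ω)
              ((WithLp.equiv 2 (Fin d → ℝ)).symm (B (k + 1) ω))
          _ ≤ ‖matProd A k ω‖₊ * (C₀ * ‖B (k + 1) ω‖₊) := mul_le_mul_right (hC₀ _) _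
      calc (‖f k ω‖₊ : ℝ≥0∞) ^ s
          ≤ ((‖matProd A k ω‖₊ * (C₀ * ‖B (k + 1) ω‖₊) : ℝ≥0) : ℝ≥0∞) ^ s :=
            ENNReal.rpow_le_rpow (ENNReal.coe_le_coe.2 h1) hs.le
        _ = (‖matProd A k ω‖₊ : ℝ≥0∞) ^ s * ((C₀ : ℝ≥0∞) ^ s * (‖B (k + 1) ω‖₊ : ℝ≥0∞) ^ s) := by
            rw [ENNReal.coe_mul, ENNReal.coe_mul, ENNReal.mul_rpow_of_nonneg _ _ hs.le,
              ENNReal.mul_rpow_of_nonneg _ _ hs.le]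
        _ = (C₀ : ℝ≥0∞) ^ s * ((‖matProd A k ω‖₊ : ℝ≥0∞) ^ s * (‖B (k + 1) ω‖₊ : ℝ≥0∞) ^ s) := by
            ring
    calc (∫⁻ ω, (‖f k ω‖₊ : ℝ≥0∞) ^ s)
        ≤ ∫⁻ ω, (C₀ : ℝ≥0∞) ^ s *
            ((‖matProd A k ω‖₊ : ℝ≥0∞) ^ s * (‖B (k + 1) ω‖₊ : ℝ≥0∞) ^ s) :=
          lintegral_mono hpt
      _ = (C₀ : ℝ≥0∞) ^ s *
            ∫⁻ ω, (‖matProd A k ω‖₊ : ℝ≥0∞) ^ s * (‖B (k + 1) ω‖₊ : ℝ≥0∞) ^ s :=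
          lintegral_const_mul _
            ((meas_rpow_nnnorm_mat s (hPm k)).mul (meas_rpow_nnnorm_vec s (hBm (k + 1))))
      _ = (C₀ : ℝ≥0∞) ^ s * (c k * Eb) := by
          have hmm : (∫⁻ ω, (‖matProd A k ω‖₊ : ℝ≥0∞) ^ s * (‖B (k + 1) ω‖₊ : ℝ≥0∞) ^ s)
              = c k * ∫⁻ ω, (‖B (k + 1) ω‖₊ : ℝ≥0∞) ^ s :=
            lintegral_mul_eq_lintegral_mul_lintegral_of_indepFun
              (meas_rpow_nnnorm_mat s (hPm k)) (meas_rpow_nnnorm_vec s (hBm (k + 1)))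
              (hIndPB k)
          rw [hmm, hBid k]
      _ = K * c k := by rw [hK]; ring
  have hmfin : ∀ k, (∫⁻ ω, (‖f k ω‖₊ : ℝ≥0∞) ^ s) ≠ ⊤ := fun k =>
    ((hm_le k).trans_lt (ENNReal.mul_lt_top hKne.lt_top (cfin k).lt_top)).ne
  have hmgeo : ∀ k, N₀ ≤ k → (∫⁻ ω, (‖f k ω‖₊ : ℝ≥0∞) ^ s) ≤ K * r ^ k :=
    fun k hk => (hm_le k).trans (mul_le_mul_right (hgeo k hk) K)
  -- uniform bound on partial sums
  set SN : ℕ → Ω → (Fin d → ℝ) := fun N ω => ∑ k ∈ Finset.range N, f k ω with hSN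
  have hSNm : ∀ N, Measurable (SN N) := fun N =>
    Finset.measurable_sum _ (fun k _ => hfm k)
  have hbound : ∃ Mtot : ℝ≥0∞, Mtot ≠ ⊤ ∧
      ∀ N, (∫⁻ ω, (‖SN N ω‖₊ : ℝ≥0∞) ^ s) ≤ Mtot := by
    rcases le_or_gt s 1 with hs1 | hs1
    · refine ⟨∑' k, ∫⁻ ω, (‖f k ω‖₊ : ℝ≥0∞) ^ s,
        (aux_tsum_lt_top hr1 hKne hmfin N₀ hmgeo).ne, fun N => ?_⟩
      have hpt : ∀ ω, (‖SN N ω‖₊ : ℝ≥0∞) ^ s ≤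
          ∑ k ∈ Finset.range N, (‖f k ω‖₊ : ℝ≥0∞) ^ s := by
        intro ω
        induction N with
        | zero => simp [hSN, ENNReal.zero_rpow_of_pos hs]
        | succ n ih =>
          have hsn : SN (n + 1) ω = SN n ω + f n ω := by
            simp [hSN, Finset.sum_range_succ]
          rw [Finset.sum_range_succ]
          calc (‖SN (n + 1) ω‖₊ : ℝ≥0∞) ^ s
              ≤ ((‖SN n ω‖₊ + ‖f n ω‖₊ : ℝ≥0) : ℝ≥0∞) ^ s := by
                apply ENNReal.rpow_le_rpow _ hs.le
                rw [hsn]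
                exact_mod_cast nnnorm_add_le _ _
            _ = ((‖SN n ω‖₊ : ℝ≥0∞) + (‖f n ω‖₊ : ℝ≥0∞)) ^ s := by rw [ENNReal.coe_add]
            _ ≤ (‖SN n ω‖₊ : ℝ≥0∞) ^ s + (‖f n ω‖₊ : ℝ≥0∞) ^ s :=
              ENNReal.rpow_add_le_add_rpow _ _ hs.le hs1
            _ ≤ _ := add_le_add_left ih _
      calc (∫⁻ ω, (‖SN N ω‖₊ : ℝ≥0∞) ^ s)
          ≤ ∫⁻ ω, ∑ k ∈ Finset.range N, (‖f k ω‖₊ : ℝ≥0∞) ^ s := lintegral_mono hpt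
        _ = ∑ k ∈ Finset.range N, ∫⁻ ω, (‖f k ω‖₊ : ℝ≥0∞) ^ s :=
          lintegral_finset_sum _ (fun k _ => meas_rpow_nnnorm_vec s (hfm k))
        _ ≤ ∑' k, ∫⁻ ω, (‖f k ω‖₊ : ℝ≥0∞) ^ s := ENNReal.sum_le_tsum _
    · -- 1 < s : use Minkowski
      set p : ℝ≥0∞ := ENNReal.ofReal s with hp
      have hp0 : p ≠ 0 := by
        simp [hp, ENNReal.ofReal_eq_zero, not_le, hs]
      have hptop : p ≠ ⊤ := ENNReal.ofReal_ne_top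
      have hptoReal : p.toReal = s := ENNReal.toReal_ofReal hs.le
      have hp1 : 1 ≤ p := by
        rw [hp, ← ENNReal.ofReal_one]
        exact ENNReal.ofReal_le_ofReal hs1.le
      set u : ℕ → ℝ≥0∞ := fun k => (∫⁻ ω, (‖f k ω‖₊ : ℝ≥0∞) ^ s) ^ (1 / s) with hu
      have hufin : ∀ k, u k ≠ ⊤ := fun k =>
        ENNReal.rpow_ne_top_of_nonneg (by positivity) (hmfin k)
      have hugeo : ∀ k, N₀ ≤ k → u k ≤ (K ^ (1 / s)) * (r ^ (1 / s)) ^ k := by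
        intro k hk
        calc u k ≤ (K * r ^ k) ^ (1 / s) :=
              ENNReal.rpow_le_rpow (hmgeo k hk) (by positivity)
          _ = K ^ (1 / s) * (r ^ (1 / s)) ^ k := by
              rw [ENNReal.mul_rpow_of_nonneg _ _ (by positivity : (0:ℝ) ≤ 1 / s),
                ← ENNReal.rpow_natCast r k, ← ENNReal.rpow_mul,
                ← ENNReal.rpow_natCast (r ^ (1 / s)) k, ← ENNReal.rpow_mul, mul_comm (k : ℝ)]
      have hr' : r ^ (1 / s) < 1 := ENNReal.rpow_lt_one hr1 (by positivity)
      have hK' : K ^ (1 / s) ≠ ⊤ := ENNReal.rpow_ne_top_of_nonneg (by positivity) hKne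
      have hUsum : (∑' k, u k) < ⊤ := aux_tsum_lt_top hr' hK' hufin N₀ hugeo
      refine ⟨(∑' k, u k) ^ s, ENNReal.rpow_ne_top_of_nonneg hs.le hUsum.ne, fun N => ?_⟩
      have heq : ∀ (g : Ω → Fin d → ℝ),
          eLpNorm g p volume = (∫⁻ ω, (‖g ω‖₊ : ℝ≥0∞) ^ s) ^ (1 / s) := by
        intro g
        simp only [eLpNorm_eq_lintegral_rpow_enorm_toReal hp0 hptop, hptoReal, enorm_eq_nnnorm]
      have hLp : eLpNorm (SN N) p volume ≤ ∑ k ∈ Finset.range N, u k := by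
        have hfun : SN N = ∑ k ∈ Finset.range N, f k := by
          funext ω
          simp [hSN, Finset.sum_apply]
        calc eLpNorm (SN N) p volume
            = eLpNorm (∑ k ∈ Finset.range N, f k) p volume := by rw [hfun]
          _ ≤ ∑ k ∈ Finset.range N, eLpNorm (f k) p volume :=
            eLpNorm_sum_le (fun k _ => (hfm k).aestronglyMeasurable) hp1
          _ = ∑ k ∈ Finset.range N, u k :=
            Finset.sum_congr rfl (fun k _ => heq (f k))
      have hSNint : (∫⁻ ω, (‖SN N ω‖₊ : ℝ≥0∞) ^ s) = (eLpNorm (SN N) p volume) ^ s := by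
        rw [heq (SN N), ← ENNReal.rpow_mul, one_div, inv_mul_cancel₀ hs.ne',
          ENNReal.rpow_one]
      rw [hSNint]
      exact ENNReal.rpow_le_rpow (hLp.trans (ENNReal.sum_le_tsum _)) hs.le
  obtain ⟨Mtot, hMt, hMb⟩ := hbound
  -- Fatou
  have hcont : Continuous (fun v : Fin d → ℝ => (‖v‖₊ : ℝ≥0∞) ^ s) :=
    ENNReal.continuous_rpow_const.comp (ENNReal.continuous_coe.comp continuous_nnnorm)
  have hae : ∀ᵐ ω : Ω, (‖Z ω‖₊ : ℝ≥0∞) ^ s =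
      liminf (fun N => (‖SN N ω‖₊ : ℝ≥0∞) ^ s) atTop := by
    filter_upwards [hZ] with ω hω
    exact ((hcont.tendsto _).comp hω).liminf_eq.symm
  calc (∫⁻ ω, (‖Z ω‖₊ : ℝ≥0∞) ^ s)
      = ∫⁻ ω, liminf (fun N => (‖SN N ω‖₊ : ℝ≥0∞) ^ s) atTop := lintegral_congr_ae hae
    _ ≤ liminf (fun N => ∫⁻ ω, (‖SN N ω‖₊ : ℝ≥0∞) ^ s) atTop :=
      lintegral_liminf_le (fun N => meas_rpow_nnnorm_vec s (hSNm N))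
    _ ≤ Mtot := by
      refine le_trans (liminf_le_liminf (Eventually.of_forall hMb)) ?_
      simp [liminf_const]
    _ < ⊤ := hMt.lt_top
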